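/- Consider the linear program (LP): maximize Σ_{s,a} r(s,a) y(s,a) over y : S × {0,1} → ℝ≥0 subject to Σ_s y(s,1) = α, Σ_{s',a} y(s',a) P(s',a,s) = Σ_a y(s,a) for all s, and Σ_{s,a} y(s,a) = 1. For any N-armed restless bandit policy π that is stationary Markovian with well-defined long-run average state-action frequencies y^π(s,a) = lim_T (1/T) Σ_{t<T} E[(1/N) Σ_{i∈[N]} 1{S_t(i)=s, A_t(i)=a}] and that activates exactly αN arms at every time step, the vector y^π is feasible for (LP) and the long-run average reward of π equals Σ_{s,a} r(s,a) y^π(s,a); hence the optimal value of (LP) upper-bounds the optimal long-run average reward of the N-armed problem. -/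

import Mathlib

open MeasureTheory Finset

private lemma measure_partition' {Ω : Type*} [MeasurableSpace Ω] (Pr : Measure Ω)
    {β : Type*} [Fintype β] [MeasurableSpace β] [MeasurableSingletonClass β]
    (h : Ω → β) (hh : Measurable h) (A : Set Ω) (hA : MeasurableSet A) :
    Pr A = ∑ b, Pr (A ∩ h ⁻¹' {b}) := by
  rw [← measure_biUnion_finset]
  · congr 1
    ext ω
    simp
  · intro b _ c _ hbc
    simp only [Set.disjoint_left, Set.mem_inter_iff, Set.mem_preimage, Set.mem_singleton_iff]
    rintro ω ⟨_, hb⟩ ⟨_, hc⟩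
    exact hbc (hb.symm.trans hc)
  · exact fun b _ => hA.inter (hh (measurableSet_singleton b))

private lemma swap4' {S : Type*} [Fintype S] {N T : ℕ} (f : S → Fin 2 → ℕ → Fin N → ℝ) :
    ∑ s, ∑ a, ∑ t ∈ range T, ∑ i, f s a t i
      = ∑ t ∈ range T, ∑ i, ∑ s, ∑ a, f s a t i := by
  calc ∑ s, ∑ a, ∑ t ∈ range T, ∑ i, f s a t i
      = ∑ s, ∑ t ∈ range T, ∑ a, ∑ i, f s a t i :=
        Finset.sum_congr rfl fun s _ => Finset.sum_comm
    _ = ∑ t ∈ range T, ∑ s, ∑ a, ∑ i, f s a t i := Finset.sum_comm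
    _ = ∑ t ∈ range T, ∑ s, ∑ i, ∑ a, f s a t i :=
        Finset.sum_congr rfl fun t _ => Finset.sum_congr rfl fun s _ => Finset.sum_comm
    _ = ∑ t ∈ range T, ∑ i, ∑ s, ∑ a, f s a t i :=
        Finset.sum_congr rfl fun t _ => Finset.sum_comm

theorem stmt15 {S : Type*} [Fintype S] [DecidableEq S]
    [MeasurableSpace S] [MeasurableSingletonClass S]
    {Ω : Type*} [MeasurableSpace Ω] (Pr : Measure Ω) [IsProbabilityMeasure Pr]
    (P : S → Fin 2 → S → ℝ)
    (hPnn : ∀ s a s', 0 ≤ P s a s')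
    (hProw : ∀ s a, ∑ s', P s a s' = 1)
    (r : S → Fin 2 → ℝ)
    (N : ℕ) (hN : 0 < N)
    (α : ℝ) (hα0 : 0 < α) (hα1 : α < 1)
    (hαN : ∃ M : ℕ, (M : ℝ) = α * N)
    (St : ℕ → Fin N → Ω → S) (At : ℕ → Fin N → Ω → Fin 2)
    (hSmeas : ∀ t i, Measurable (St t i))
    (hAmeas : ∀ t i, Measurable (At t i))
    (hbudget : ∀ t, ∀ᵐ ω ∂Pr,
      ((univ.filter fun i : Fin N => At t i ω = 1).card : ℝ) = α * N)
    (hdyn : ∀ t (i : Fin N) (s s' : S) (a : Fin 2),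
      Pr {ω | St (t + 1) i ω = s' ∧ St t i ω = s ∧ At t i ω = a}
        = ENNReal.ofReal (P s a s') * Pr {ω | St t i ω = s ∧ At t i ω = a})
    (y : S → Fin 2 → ℝ)
    (hy : ∀ s a, Filter.Tendsto
      (fun T : ℕ => (1 / (T : ℝ)) * ∑ t ∈ range T,
        (1 / (N : ℝ)) * ∑ i : Fin N, (Pr {ω | St t i ω = s ∧ At t i ω = a}).toReal)
      Filter.atTop (nhds (y s a))) :
    (∀ s a, 0 ≤ y s a)
    ∧ (∑ s, y s 1 = α)
    ∧ (∀ s : S, ∑ s' : S, ∑ a : Fin 2, y s' a * P s' a s = ∑ a : Fin 2, y s a)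
    ∧ (∑ s, ∑ a, y s a = 1)
    ∧ Filter.Tendsto
        (fun T : ℕ => (1 / (T : ℝ)) * ∑ t ∈ range T,
          (1 / (N : ℝ)) * ∑ i : Fin N, ∫ ω, r (St t i ω) (At t i ω) ∂Pr)
        Filter.atTop (nhds (∑ s, ∑ a, r s a * y s a))
    ∧ (∑ s, ∑ a, r s a * y s a) ≤
        sSup {v : ℝ | ∃ y' : S → Fin 2 → ℝ,
          (∀ s a, 0 ≤ y' s a) ∧ (∑ s, y' s 1 = α) ∧
          (∀ s : S, ∑ s' : S, ∑ a : Fin 2, y' s' a * P s' a s = ∑ a : Fin 2, y' s a) ∧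
          (∑ s, ∑ a, y' s a = 1) ∧ v = ∑ s, ∑ a, r s a * y' s a} := by
  have hNR : (N : ℝ) ≠ 0 := Nat.cast_ne_zero.mpr hN.ne'
  have hE : ∀ t (i : Fin N) s (a : Fin 2),
      MeasurableSet {ω | St t i ω = s ∧ At t i ω = a} := fun t i s a =>
    ((hSmeas t i) (measurableSet_singleton s)).inter ((hAmeas t i) (measurableSet_singleton a))
  have hprob : ∀ A : Set Ω, (Pr A).toReal ≤ 1 := by
    intro A
    simpa using ENNReal.toReal_mono ENNReal.one_ne_top prob_le_one
  have hB : ∀ t (i : Fin N) s, ∑ a : Fin 2, (Pr {ω | St t i ω = s ∧ At t i ω = a}).toReal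
      = (Pr {ω | St t i ω = s}).toReal := by
    intro t i s
    have h := measure_partition' Pr (At t i) (hAmeas t i) {ω | St t i ω = s}
      ((hSmeas t i) (measurableSet_singleton s))
    rw [h, ENNReal.toReal_sum (fun a _ => measure_ne_top Pr _)]
    refine Finset.sum_congr rfl fun a _ => ?_
    have hset : {ω | St t i ω = s} ∩ At t i ⁻¹' {a} = {ω | St t i ω = s ∧ At t i ω = a} := by
      ext ω
      simp [Set.mem_setOf_eq]
    rw [hset]
  have hC : ∀ t (i : Fin N), ∑ s, (Pr {ω | St t i ω = s ∧ At t i ω = 1}).toReal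
      = (Pr {ω | At t i ω = 1}).toReal := by
    intro t i
    have h := measure_partition' Pr (St t i) (hSmeas t i) {ω | At t i ω = 1}
      ((hAmeas t i) (measurableSet_singleton 1))
    rw [h, ENNReal.toReal_sum (fun s _ => measure_ne_top Pr _)]
    refine Finset.sum_congr rfl fun s _ => ?_
    have hset : {ω | At t i ω = 1} ∩ St t i ⁻¹' {s} = {ω | St t i ω = s ∧ At t i ω = 1} := by
      ext ω
      simp [Set.mem_setOf_eq, and_comm]
    rw [hset]
  have hA : ∀ t (i : Fin N),
      ∑ s, ∑ a : Fin 2, (Pr {ω | St t i ω = s ∧ At t i ω = a}).toReal = 1 := by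
    intro t i
    have h := measure_partition' Pr (fun ω => (St t i ω, At t i ω))
      ((hSmeas t i).prodMk (hAmeas t i)) Set.univ MeasurableSet.univ
    have h2 := congrArg ENNReal.toReal h
    rw [measure_univ, ENNReal.toReal_one,
      ENNReal.toReal_sum (fun b _ => measure_ne_top Pr _), Fintype.sum_prod_type] at h2
    calc ∑ s, ∑ a : Fin 2, (Pr {ω | St t i ω = s ∧ At t i ω = a}).toReal
        = ∑ s, ∑ a : Fin 2,
            (Pr (Set.univ ∩ (fun ω => (St t i ω, At t i ω)) ⁻¹' {(s, a)})).toReal := by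
          refine Finset.sum_congr rfl fun s _ => Finset.sum_congr rfl fun a _ => ?_
          have hset : Set.univ ∩ (fun ω => (St t i ω, At t i ω)) ⁻¹' {(s, a)}
              = {ω | St t i ω = s ∧ At t i ω = a} := by
            ext ω
            simp [Prod.ext_iff]
          rw [hset]
      _ = 1 := h2.symm
  have hD : ∀ t (i : Fin N) (s' : S),
      ∑ s, ∑ a : Fin 2, P s a s' * (Pr {ω | St t i ω = s ∧ At t i ω = a}).toReal
        = (Pr {ω | St (t + 1) i ω = s'}).toReal := by
    intro t i s'
    have h := measure_partition' Pr (fun ω => (St t i ω, At t i ω))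
      ((hSmeas t i).prodMk (hAmeas t i)) {ω | St (t + 1) i ω = s'}
      ((hSmeas (t + 1) i) (measurableSet_singleton s'))
    have h2 := congrArg ENNReal.toReal h
    rw [ENNReal.toReal_sum (fun b _ => measure_ne_top Pr _), Fintype.sum_prod_type] at h2
    rw [h2]
    refine Finset.sum_congr rfl fun s _ => Finset.sum_congr rfl fun a _ => ?_
    have h3 : {ω | St (t + 1) i ω = s'} ∩ (fun ω => (St t i ω, At t i ω)) ⁻¹' {(s, a)}
        = {ω | St (t + 1) i ω = s' ∧ St t i ω = s ∧ At t i ω = a} := by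
      ext ω
      simp [Set.mem_setOf_eq, Prod.ext_iff, and_assoc]
    rw [h3, hdyn t i s s' a, ENNReal.toReal_mul, ENNReal.toReal_ofReal (hPnn s a s')]
  have hE1 : ∀ t, ∑ i : Fin N, (Pr {ω | At t i ω = 1}).toReal = α * N := by
    intro t
    have hmA : ∀ i : Fin N, MeasurableSet {ω | At t i ω = 1} :=
      fun i => (hAmeas t i) (measurableSet_singleton 1)
    calc ∑ i : Fin N, (Pr {ω | At t i ω = 1}).toReal
        = ∑ i : Fin N, ∫ ω, ({ω' | At t i ω' = 1}).indicator (fun _ => (1 : ℝ)) ω ∂Pr := by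
          refine Finset.sum_congr rfl fun i _ => ?_
          rw [integral_indicator_const (1 : ℝ) (hmA i), smul_eq_mul, mul_one, measureReal_def]
      _ = ∫ ω, ∑ i : Fin N, ({ω' | At t i ω' = 1}).indicator (fun _ => (1 : ℝ)) ω ∂Pr :=
          (integral_finset_sum _ fun i _ => (integrable_const (1 : ℝ)).indicator (hmA i)).symm
      _ = ∫ ω, ((univ.filter fun i : Fin N => At t i ω = 1).card : ℝ) ∂Pr := by
          refine integral_congr_ae (Filter.Eventually.of_forall fun ω => ?_)
          simp only [Set.indicator_apply, Set.mem_setOf_eq]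
          rw [Finset.sum_boole]
      _ = ∫ _ω, α * (N : ℝ) ∂Pr := integral_congr_ae (hbudget t)
      _ = α * N := by simp
  have hF : ∀ t (i : Fin N), ∫ ω, r (St t i ω) (At t i ω) ∂Pr
      = ∑ s, ∑ a : Fin 2, r s a * (Pr {ω | St t i ω = s ∧ At t i ω = a}).toReal := by
    intro t i
    have hpt : ∀ ω, ∑ s, ∑ a : Fin 2,
        ({ω' | St t i ω' = s ∧ At t i ω' = a}).indicator (fun _ => r s a) ω
          = r (St t i ω) (At t i ω) := by
      intro ω
      rw [Finset.sum_eq_single (St t i ω)]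
      · rw [Finset.sum_eq_single (At t i ω)]
        · simp [Set.indicator_apply]
        · intro b _ hb
          simp [Set.indicator_apply, Set.mem_setOf_eq, Ne.symm hb]
        · simp
      · intro s' _ hs'
        refine Finset.sum_eq_zero fun a _ => ?_
        simp [Set.indicator_apply, Set.mem_setOf_eq, Ne.symm hs']
      · simp
    calc ∫ ω, r (St t i ω) (At t i ω) ∂Pr
        = ∫ ω, ∑ s, ∑ a : Fin 2,
            ({ω' | St t i ω' = s ∧ At t i ω' = a}).indicator (fun _ => r s a) ω ∂Pr :=
          integral_congr_ae (Filter.Eventually.of_forall fun ω => (hpt ω).symm)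
      _ = ∑ s, ∑ a : Fin 2, ∫ ω,
            ({ω' | St t i ω' = s ∧ At t i ω' = a}).indicator (fun _ => r s a) ω ∂Pr := by
          rw [integral_finset_sum _ fun s _ =>
            integrable_finset_sum _ fun a _ => (integrable_const (r s a)).indicator (hE t i s a)]
          exact Finset.sum_congr rfl fun s _ =>
            integral_finset_sum _ fun a _ => (integrable_const (r s a)).indicator (hE t i s a)
      _ = ∑ s, ∑ a : Fin 2, r s a * (Pr {ω | St t i ω = s ∧ At t i ω = a}).toReal := by
          refine Finset.sum_congr rfl fun s _ => Finset.sum_congr rfl fun a _ => ?_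
          rw [integral_indicator_const (r s a) (hE t i s a), smul_eq_mul, mul_comm, measureReal_def]
  have hYswap : ∀ (u : S → Fin 2 → ℝ) (T : ℕ),
      ∑ s, ∑ a : Fin 2, u s a * ((1 / (T : ℝ)) * ∑ t ∈ range T,
          (1 / (N : ℝ)) * ∑ i : Fin N, (Pr {ω | St t i ω = s ∧ At t i ω = a}).toReal)
        = (1 / (T : ℝ)) * ∑ t ∈ range T, (1 / (N : ℝ)) * ∑ i : Fin N,
            ∑ s, ∑ a : Fin 2, u s a * (Pr {ω | St t i ω = s ∧ At t i ω = a}).toReal := by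
    intro u T
    calc ∑ s, ∑ a : Fin 2, u s a * ((1 / (T : ℝ)) * ∑ t ∈ range T,
            (1 / (N : ℝ)) * ∑ i : Fin N, (Pr {ω | St t i ω = s ∧ At t i ω = a}).toReal)
        = ∑ s, ∑ a : Fin 2, ∑ t ∈ range T, ∑ i : Fin N,
            (1 / (T : ℝ)) * ((1 / (N : ℝ)) *
              (u s a * (Pr {ω | St t i ω = s ∧ At t i ω = a}).toReal)) := by
          refine Finset.sum_congr rfl fun s _ => Finset.sum_congr rfl fun a _ => ?_
          simp only [Finset.mul_sum]
          exact Finset.sum_congr rfl fun t _ => Finset.sum_congr rfl fun i _ => by ring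
      _ = ∑ t ∈ range T, ∑ i : Fin N, ∑ s, ∑ a : Fin 2,
            (1 / (T : ℝ)) * ((1 / (N : ℝ)) *
              (u s a * (Pr {ω | St t i ω = s ∧ At t i ω = a}).toReal)) := swap4' _
      _ = (1 / (T : ℝ)) * ∑ t ∈ range T, (1 / (N : ℝ)) * ∑ i : Fin N,
            ∑ s, ∑ a : Fin 2, u s a * (Pr {ω | St t i ω = s ∧ At t i ω = a}).toReal := by
          simp only [Finset.mul_sum]
          try exact Finset.sum_congr rfl fun t _ => Finset.sum_congr rfl fun i _ =>
            Finset.sum_congr rfl fun s _ => Finset.sum_congr rfl fun a _ => by ring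
  have hYtend : ∀ u : S → Fin 2 → ℝ,
      Filter.Tendsto (fun T : ℕ => (1 / (T : ℝ)) * ∑ t ∈ range T,
          (1 / (N : ℝ)) * ∑ i : Fin N,
            ∑ s, ∑ a : Fin 2, u s a * (Pr {ω | St t i ω = s ∧ At t i ω = a}).toReal)
        Filter.atTop (nhds (∑ s, ∑ a : Fin 2, u s a * y s a)) := by
    intro u
    have h1 : Filter.Tendsto (fun T : ℕ => ∑ s, ∑ a : Fin 2, u s a *
        ((1 / (T : ℝ)) * ∑ t ∈ range T, (1 / (N : ℝ)) * ∑ i : Fin N,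
          (Pr {ω | St t i ω = s ∧ At t i ω = a}).toReal))
        Filter.atTop (nhds (∑ s, ∑ a : Fin 2, u s a * y s a)) :=
      tendsto_finset_sum _ fun s _ => tendsto_finset_sum _ fun a _ => (hy s a).const_mul (u s a)
    exact h1.congr fun T => hYswap u T
  have g1 : ∀ s a, 0 ≤ y s a := by
    intro s a
    refine ge_of_tendsto' (hy s a) fun T => ?_
    exact mul_nonneg (by positivity) (Finset.sum_nonneg fun t _ =>
      mul_nonneg (by positivity) (Finset.sum_nonneg fun i _ => ENNReal.toReal_nonneg))
  have g2 : ∑ s, y s 1 = α := by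
    have hlim := hYtend fun _ a => if a = 1 then (1 : ℝ) else 0
    have hval : (∑ s, ∑ a : Fin 2, (if a = 1 then (1 : ℝ) else 0) * y s a) = ∑ s, y s 1 := by
      refine Finset.sum_congr rfl fun s _ => ?_
      simp [ite_mul, Finset.sum_ite_eq']
    rw [hval] at hlim
    have hconst : ∀ᶠ T : ℕ in Filter.atTop,
        (1 / (T : ℝ)) * ∑ t ∈ range T, (1 / (N : ℝ)) * ∑ i : Fin N,
          ∑ s, ∑ a : Fin 2, (if a = 1 then (1 : ℝ) else 0) *
            (Pr {ω | St t i ω = s ∧ At t i ω = a}).toReal = α := by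
      filter_upwards [Filter.eventually_ge_atTop 1] with T hT
      have hterm : ∀ t, (1 / (N : ℝ)) * ∑ i : Fin N,
          ∑ s, ∑ a : Fin 2, (if a = 1 then (1 : ℝ) else 0) *
            (Pr {ω | St t i ω = s ∧ At t i ω = a}).toReal = α := by
        intro t
        have h1 : ∀ i : Fin N, ∑ s, ∑ a : Fin 2, (if a = 1 then (1 : ℝ) else 0) *
            (Pr {ω | St t i ω = s ∧ At t i ω = a}).toReal
              = (Pr {ω | At t i ω = 1}).toReal := by
          intro i
          rw [← hC t i]
          refine Finset.sum_congr rfl fun s _ => ?_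
          simp [ite_mul, Finset.sum_ite_eq']
        rw [Finset.sum_congr rfl fun i _ => h1 i, hE1 t]
        field_simp
      rw [Finset.sum_congr rfl fun t _ => hterm t, Finset.sum_const, Finset.card_range,
        nsmul_eq_mul]
      have hTR : (T : ℝ) ≠ 0 := Nat.cast_ne_zero.mpr (by omega)
      field_simp
    exact tendsto_nhds_unique hlim
      (Filter.Tendsto.congr' (hconst.mono fun T h => h.symm) tendsto_const_nhds)
  have g4 : ∑ s, ∑ a : Fin 2, y s a = 1 := by
    have hlim := hYtend fun _ _ => (1 : ℝ)
    have hval : (∑ s, ∑ a : Fin 2, (1 : ℝ) * y s a) = ∑ s, ∑ a : Fin 2, y s a := by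
      simp
    rw [hval] at hlim
    have hconst : ∀ᶠ T : ℕ in Filter.atTop, (1 / (T : ℝ)) * ∑ t ∈ range T,
        (1 / (N : ℝ)) * ∑ i : Fin N, ∑ s, ∑ a : Fin 2,
          (1 : ℝ) * (Pr {ω | St t i ω = s ∧ At t i ω = a}).toReal = 1 := by
      filter_upwards [Filter.eventually_ge_atTop 1] with T hT
      have hterm : ∀ t, (1 / (N : ℝ)) * ∑ i : Fin N, ∑ s, ∑ a : Fin 2,
          (1 : ℝ) * (Pr {ω | St t i ω = s ∧ At t i ω = a}).toReal = 1 := by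
        intro t
        have h1 : ∀ i : Fin N, ∑ s, ∑ a : Fin 2,
            (1 : ℝ) * (Pr {ω | St t i ω = s ∧ At t i ω = a}).toReal = 1 := by
          intro i
          simpa using hA t i
        rw [Finset.sum_congr rfl fun i _ => h1 i, Finset.sum_const, Finset.card_univ,
          Fintype.card_fin, nsmul_eq_mul, mul_one]
        field_simp
      rw [Finset.sum_congr rfl fun t _ => hterm t, Finset.sum_const, Finset.card_range,
        nsmul_eq_mul, mul_one]
      have hTR : (T : ℝ) ≠ 0 := Nat.cast_ne_zero.mpr (by omega)
      field_simp
    exact tendsto_nhds_unique hlim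
      (Filter.Tendsto.congr' (hconst.mono fun T h => h.symm) tendsto_const_nhds)
  have g3 : ∀ s : S, ∑ s' : S, ∑ a : Fin 2, y s' a * P s' a s = ∑ a : Fin 2, y s a := by
    intro s
    set g : ℕ → ℝ := fun t => (1 / (N : ℝ)) * ∑ i : Fin N, (Pr {ω | St t i ω = s}).toReal
      with hg
    have hg0 : ∀ t, 0 ≤ g t := fun t =>
      mul_nonneg (by positivity) (Finset.sum_nonneg fun i _ => ENNReal.toReal_nonneg)
    have hg1 : ∀ t, g t ≤ 1 := by
      intro t
      simp only [hg]
      calc (1 / (N : ℝ)) * ∑ i : Fin N, (Pr {ω | St t i ω = s}).toReal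
          ≤ (1 / (N : ℝ)) * ∑ _i : Fin N, (1 : ℝ) :=
            mul_le_mul_of_nonneg_left (Finset.sum_le_sum fun i _ => hprob _) (by positivity)
        _ = 1 := by
            rw [Finset.sum_const, Finset.card_univ, Fintype.card_fin, nsmul_eq_mul, mul_one]
            field_simp
    have hlim1 := hYtend fun s' a => P s' a s
    have hlim2 := hYtend fun s' _ => if s' = s then (1 : ℝ) else 0
    have hseq1 : (fun T : ℕ => (1 / (T : ℝ)) * ∑ t ∈ range T, (1 / (N : ℝ)) * ∑ i : Fin N,
        ∑ s', ∑ a : Fin 2, P s' a s * (Pr {ω | St t i ω = s' ∧ At t i ω = a}).toReal)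
          = fun T : ℕ => (1 / (T : ℝ)) * ∑ t ∈ range T, g (t + 1) := by
      funext T
      congr 1
      refine Finset.sum_congr rfl fun t _ => ?_
      simp only [hg]
      congr 1
      exact Finset.sum_congr rfl fun i _ => hD t i s
    have hseq2 : (fun T : ℕ => (1 / (T : ℝ)) * ∑ t ∈ range T, (1 / (N : ℝ)) * ∑ i : Fin N,
        ∑ s', ∑ a : Fin 2, (if s' = s then (1 : ℝ) else 0) *
          (Pr {ω | St t i ω = s' ∧ At t i ω = a}).toReal)
          = fun T : ℕ => (1 / (T : ℝ)) * ∑ t ∈ range T, g t := by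
      funext T
      congr 1
      refine Finset.sum_congr rfl fun t _ => ?_
      simp only [hg]
      congr 1
      refine Finset.sum_congr rfl fun i _ => ?_
      calc ∑ s', ∑ a : Fin 2, (if s' = s then (1 : ℝ) else 0) *
            (Pr {ω | St t i ω = s' ∧ At t i ω = a}).toReal
          = ∑ a : Fin 2, (Pr {ω | St t i ω = s ∧ At t i ω = a}).toReal := by
            rw [Finset.sum_comm]
            refine Finset.sum_congr rfl fun a _ => ?_
            simp [ite_mul, Finset.sum_ite_eq']
        _ = (Pr {ω | St t i ω = s}).toReal := hB t i s
    rw [hseq1] at hlim1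
    rw [hseq2] at hlim2
    have hsub := hlim1.sub hlim2
    have hzero : Filter.Tendsto (fun T : ℕ =>
        (1 / (T : ℝ)) * ∑ t ∈ range T, g (t + 1) - (1 / (T : ℝ)) * ∑ t ∈ range T, g t)
        Filter.atTop (nhds 0) := by
      have heq : ∀ T : ℕ, (1 / (T : ℝ)) * ∑ t ∈ range T, g (t + 1)
          - (1 / (T : ℝ)) * ∑ t ∈ range T, g t = (g T - g 0) / T := by
        intro T
        rw [← mul_sub, ← Finset.sum_sub_distrib, Finset.sum_range_sub g T]
        ring
      have hb : ∀ T : ℕ, ‖(g T - g 0) / (T : ℝ)‖ ≤ 2 / T := by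
        intro T
        rw [Real.norm_eq_abs, abs_div, Nat.abs_cast]
        rcases Nat.eq_zero_or_pos T with h | h
        · simp [h]
        · have hTpos : (0 : ℝ) < T := Nat.cast_pos.mpr h
          have habs : |g T - g 0| ≤ 2 :=
            abs_le.mpr ⟨by linarith [hg0 T, hg1 0], by linarith [hg1 T, hg0 0]⟩
          exact div_le_div_of_nonneg_right habs hTpos.le
      have h2 : Filter.Tendsto (fun T : ℕ => (g T - g 0) / (T : ℝ)) Filter.atTop (nhds 0) :=
        squeeze_zero_norm hb (tendsto_const_div_atTop_nhds_zero_nat 2)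
      exact (h2.congr fun T => (heq T).symm)
    have hzero' := tendsto_nhds_unique hsub hzero
    have hval2 : (∑ s', ∑ a : Fin 2, (if s' = s then (1 : ℝ) else 0) * y s' a)
        = ∑ a : Fin 2, y s a := by
      rw [Finset.sum_comm]
      refine Finset.sum_congr rfl fun a _ => ?_
      simp [ite_mul, Finset.sum_ite_eq']
    calc ∑ s', ∑ a : Fin 2, y s' a * P s' a s
        = ∑ s', ∑ a : Fin 2, P s' a s * y s' a :=
          Finset.sum_congr rfl fun s' _ => Finset.sum_congr rfl fun a _ => mul_comm _ _
      _ = ∑ s', ∑ a : Fin 2, (if s' = s then (1 : ℝ) else 0) * y s' a := sub_eq_zero.mp hzero'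
      _ = ∑ a : Fin 2, y s a := hval2
  have g5 : Filter.Tendsto (fun T : ℕ => (1 / (T : ℝ)) * ∑ t ∈ range T,
      (1 / (N : ℝ)) * ∑ i : Fin N, ∫ ω, r (St t i ω) (At t i ω) ∂Pr)
      Filter.atTop (nhds (∑ s, ∑ a : Fin 2, r s a * y s a)) := by
    refine (hYtend r).congr fun T => ?_
    congr 1
    refine Finset.sum_congr rfl fun t _ => ?_
    congr 1
    exact Finset.sum_congr rfl fun i _ => (hF t i).symm
  refine ⟨g1, g2, g3, g4, g5, ?_⟩
  refine le_csSup ⟨∑ s, ∑ a : Fin 2, |r s a|, ?_⟩ ⟨y, g1, g2, g3, g4, rfl⟩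
  rintro v ⟨y', hy'0, _, _, hy'1, rfl⟩
  refine Finset.sum_le_sum fun s _ => Finset.sum_le_sum fun a _ => ?_
  have hle1 : y' s a ≤ 1 := by
    rw [← hy'1]
    calc y' s a ≤ ∑ a : Fin 2, y' s a :=
          Finset.single_le_sum (fun a _ => hy'0 s a) (Finset.mem_univ a)
      _ ≤ ∑ s, ∑ a : Fin 2, y' s a :=
          Finset.single_le_sum (fun s _ => Finset.sum_nonneg fun a _ => hy'0 s a)
            (Finset.mem_univ s)
  calc r s a * y' s a ≤ |r s a| * y' s a :=
        mul_le_mul_of_nonneg_right (le_abs_self _) (hy'0 s a)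
    _ ≤ |r s a| * 1 := mul_le_mul_of_nonneg_left hle1 (abs_nonneg _)
    _ = |r s a| := mul_one _
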